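/- For every 0 ≤ k ≤ n and 0 < q < 1, the sum over all top-k lists π_k (injective maps {1,...,k} → [n]) of q^{d(π_k) + L(π_k)} equals ψ(n,q) / ψ(n-k,q). -/

import Mathlib

open Finset

/-- ψ(n,q) = ∏_{i=1}^{n} (1 + q + ... + q^{i-1}). -/
def psi (n : ℕ) (q : ℝ) : ℝ := ∏ i ∈ Finset.range n, ∑ j ∈ Finset.range (i + 1), q ^ j

/-- Reverse major index of a full permutation. -/
def dR {n : ℕ} (π : Equiv.Perm (Fin n)) : ℕ :=
  ∑ i : Fin (n - 1),
    if π ⟨i.val + 1, by have := i.isLt; omega⟩ < π ⟨i.val, by have := i.isLt; omega⟩ then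
      n - (i.val + 1) else 0

/-- Truncated reverse major index of a top-k list. -/
def dtop {n k : ℕ} (f : Fin k → Fin n) : ℕ :=
  ∑ i : Fin (k - 1),
    if f ⟨i.val + 1, by have := i.isLt; omega⟩ < f ⟨i.val, by have := i.isLt; omega⟩ then
      n - (i.val + 1) else 0

/-- L(π_k): number of items not appearing in the top-k list that are smaller than its
last entry. -/
def Ltop {n k : ℕ} (f : Fin k → Fin n) : ℕ :=
  if h : 0 < k then
    (Finset.univ.filter
      (fun x : Fin n => x ∉ Finset.image f Finset.univ ∧ x < f ⟨k - 1, by omega⟩)).card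
  else 0

def cc {n k : ℕ} (f : Fin k → Fin n) (x : Fin n) : ℕ :=
  (Finset.univ.filter (fun y : Fin n => y ∉ Finset.image f Finset.univ ∧ y < x)).card

def gg {n k : ℕ} (f : Fin k → Fin n) (x : Fin n) : ℕ :=
  cc f x + (if h : 0 < k then (if x < f ⟨k - 1, by omega⟩ then n - k else 0) else 0)

lemma psi_pos {q : ℝ} (hq : 0 < q) (n : ℕ) : 0 < psi n q := by
  apply Finset.prod_pos
  intro i _
  apply Finset.sum_pos (fun j _ => pow_pos hq j) (by simp)

lemma psi_succ (n : ℕ) (q : ℝ) :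
    psi (n + 1) q = psi n q * ∑ j ∈ Finset.range (n + 1), q ^ j := by
  simp [psi, Finset.prod_range_succ]

lemma image_snoc {n k : ℕ} (f : Fin k → Fin n) (x : Fin n) :
    Finset.image (Fin.snoc f x : Fin (k + 1) → Fin n) Finset.univ
      = insert x (Finset.image f Finset.univ) := by
  ext y
  simp only [Finset.mem_image, Finset.mem_univ, true_and, Finset.mem_insert]
  constructor
  · rintro ⟨i, hi⟩
    induction i using Fin.lastCases with
    | last => rw [Fin.snoc_last] at hi; exact Or.inl hi.symm
    | cast j => rw [Fin.snoc_castSucc] at hi; exact Or.inr ⟨j, hi⟩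
  · rintro (rfl | ⟨j, hj⟩)
    · exact ⟨Fin.last k, Fin.snoc_last _ _⟩
    · exact ⟨Fin.castSucc j, by rw [Fin.snoc_castSucc]; exact hj⟩

lemma snoc_lt {n k : ℕ} (f : Fin k → Fin n) (x : Fin n) (j : ℕ) (hj : j < k)
    (hj2 : j < k + 1) : (Fin.snoc f x : Fin (k + 1) → Fin n) ⟨j, hj2⟩ = f ⟨j, hj⟩ := by
  have : (⟨j, hj2⟩ : Fin (k + 1)) = Fin.castSucc ⟨j, hj⟩ := rfl
  rw [this, Fin.snoc_castSucc]

lemma snoc_last' {n k : ℕ} (f : Fin k → Fin n) (x : Fin n) (hj2 : k < k + 1) :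
    (Fin.snoc f x : Fin (k + 1) → Fin n) ⟨k, hj2⟩ = x := by
  have : (⟨k, hj2⟩ : Fin (k + 1)) = Fin.last k := rfl
  rw [this, Fin.snoc_last]

lemma Ltop_snoc {n k : ℕ} (f : Fin k → Fin n) (x : Fin n) :
    Ltop (Fin.snoc f x : Fin (k + 1) → Fin n) = cc f x := by
  rw [Ltop, dif_pos (Nat.succ_pos k), cc]
  simp only [Nat.add_sub_cancel]
  rw [snoc_last', image_snoc]
  congr 1
  apply Finset.filter_congr
  intro y _
  simp only [Finset.mem_insert]
  constructor
  · rintro ⟨hni, hlt⟩; exact ⟨fun h => hni (Or.inr h), hlt⟩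
  · rintro ⟨hni, hlt⟩
    exact ⟨fun h => h.elim (fun h' => absurd hlt (by rw [h']; exact lt_irrefl x)) hni, hlt⟩

lemma dtop_snoc {n k : ℕ} (f : Fin k → Fin n) (x : Fin n) :
    dtop (Fin.snoc f x : Fin (k + 1) → Fin n)
      = dtop f + (if h : 0 < k then (if x < f ⟨k - 1, by omega⟩ then n - k else 0) else 0) := by
  rcases k with _ | m
  · simp [dtop]
  · rw [dif_pos (Nat.succ_pos m)]
    show ∑ i : Fin (m + 1), _ = _
    rw [Fin.sum_univ_castSucc]
    congr 1
    · rw [dtop]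
      apply Finset.sum_congr rfl
      intro i _
      have hi := i.isLt
      simp only [Fin.coe_castSucc]
      rw [snoc_lt f x _ (by omega) (by omega), snoc_lt f x _ (by omega) (by omega)]
    · simp only [Fin.val_last]
      rw [snoc_lt f x m (by omega) (by omega), snoc_last']
      rfl

lemma injective_snoc_iff {n k : ℕ} (f : Fin k → Fin n) (x : Fin n) :
    Function.Injective (Fin.snoc f x : Fin (k + 1) → Fin n)
      ↔ Function.Injective f ∧ x ∉ Finset.image f Finset.univ := by
  constructor
  · intro h
    refine ⟨fun a b hab => ?_, fun hx => ?_⟩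
    · have := h (a₁ := Fin.castSucc a) (a₂ := Fin.castSucc b)
        (by rw [Fin.snoc_castSucc, Fin.snoc_castSucc]; exact hab)
      exact Fin.castSucc_injective k this
    · obtain ⟨j, hj⟩ := Finset.mem_image.mp hx
      have := h (a₁ := Fin.castSucc j) (a₂ := Fin.last k)
        (by rw [Fin.snoc_castSucc, Fin.snoc_last]; exact hj.2)
      exact absurd this (Fin.ne_of_lt (Fin.castSucc_lt_last j))
  · rintro ⟨hf, hx⟩ a b hab
    induction a using Fin.lastCases with
    | last =>
      induction b using Fin.lastCases with
      | last => rfl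
      | cast b' =>
        rw [Fin.snoc_last, Fin.snoc_castSucc] at hab
        exact absurd (Finset.mem_image.mpr ⟨b', Finset.mem_univ _, hab.symm⟩) hx
    | cast a' =>
      induction b using Fin.lastCases with
      | last =>
        rw [Fin.snoc_last, Fin.snoc_castSucc] at hab
        exact absurd (Finset.mem_image.mpr ⟨a', Finset.mem_univ _, hab⟩) hx
      | cast b' =>
        rw [Fin.snoc_castSucc, Fin.snoc_castSucc] at hab
        rw [hf hab]

lemma cc_eq {n k : ℕ} (f : Fin k → Fin n) (x : Fin n) :
    cc f x = ((Finset.image f Finset.univ)ᶜ.filter (fun y => y < x)).card := by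
  rw [cc]
  congr 1
  ext y
  simp [Finset.mem_filter, and_comm]

lemma sum_gg {n k : ℕ} (f : Fin k → Fin n) (hf : Function.Injective f) (q : ℝ) :
    ∑ x ∈ (Finset.image f Finset.univ)ᶜ, q ^ (gg f x)
      = ∑ j ∈ Finset.Ico (Ltop f) (Ltop f + (n - k)), q ^ j := by
  set R := (Finset.image f Finset.univ)ᶜ with hR
  have hcard : R.card = n - k := by
    rw [hR, Finset.card_compl, Finset.card_image_of_injective _ hf]
    simp
  have hcc_lt : ∀ x ∈ R, cc f x < n - k := by
    intro x hx
    have h1 : (R.filter (fun y => y < x)).card ≤ (R.erase x).card := by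
      apply Finset.card_le_card
      intro y hy
      rw [Finset.mem_filter] at hy
      exact Finset.mem_erase.mpr ⟨ne_of_lt hy.2, hy.1⟩
    rw [Finset.card_erase_of_mem hx] at h1
    have h2 : 0 < R.card := Finset.card_pos.mpr ⟨x, hx⟩
    rw [cc_eq, ← hR]
    omega
  have hmono : ∀ x₁ x₂ : Fin n, x₁ ≤ x₂ → cc f x₁ ≤ cc f x₂ := by
    intro x₁ x₂ h
    rw [cc_eq, cc_eq]
    apply Finset.card_le_card
    intro y hy
    rw [Finset.mem_filter] at hy ⊢
    exact ⟨hy.1, lt_of_lt_of_le hy.2 h⟩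
  have hstrict : ∀ x₁ ∈ R, ∀ x₂ : Fin n, x₁ < x₂ → cc f x₁ < cc f x₂ := by
    intro x₁ h₁ x₂ h
    rw [cc_eq, cc_eq, ← hR]
    apply Finset.card_lt_card
    have hsub : R.filter (fun y => y < x₁) ⊆ R.filter (fun y => y < x₂) := by
      intro y hy
      rw [Finset.mem_filter] at hy ⊢
      exact ⟨hy.1, lt_trans hy.2 h⟩
    rw [Finset.ssubset_iff_of_subset hsub]
    exact ⟨x₁, Finset.mem_filter.mpr ⟨h₁, h⟩, fun hc => absurd (Finset.mem_filter.mp hc).2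
      (lt_irrefl x₁)⟩
  have hLle : Ltop f ≤ n - k := by
    rw [Ltop]
    split
    · rename_i hk
      calc (Finset.univ.filter
            (fun x : Fin n => x ∉ Finset.image f Finset.univ ∧ x < f ⟨k - 1, by omega⟩)).card
          = cc f (f ⟨k - 1, by omega⟩) := rfl
        _ = (R.filter (fun y => y < f ⟨k - 1, by omega⟩)).card := by rw [cc_eq]
        _ ≤ R.card := Finset.card_le_card (Finset.filter_subset _ _)
        _ = n - k := hcard
    · omega
  have hinj : ∀ x₁ ∈ R, ∀ x₂ ∈ R, x₁ < x₂ → gg f x₁ ≠ gg f x₂ := by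
    intro x₁ h₁ x₂ h₂ hlt
    rw [gg, gg]
    by_cases hk : 0 < k
    · rw [dif_pos hk, dif_pos hk]
      set a := f ⟨k - 1, by omega⟩ with ha
      by_cases hx1 : x₁ < a <;> by_cases hx2 : x₂ < a
      · rw [if_pos hx1, if_pos hx2]
        have := hstrict x₁ h₁ x₂ hlt
        omega
      · rw [if_pos hx1, if_neg hx2]
        have := hcc_lt x₂ h₂
        omega
      · exact absurd (lt_trans hlt hx2) hx1
      · rw [if_neg hx1, if_neg hx2]
        have := hstrict x₁ h₁ x₂ hlt
        omega
    · rw [dif_neg hk, dif_neg hk]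
      have := hstrict x₁ h₁ x₂ hlt
      omega
  have hinjOn : ∀ x₁ ∈ R, ∀ x₂ ∈ R, gg f x₁ = gg f x₂ → x₁ = x₂ := by
    intro x₁ h₁ x₂ h₂ heq
    rcases lt_trichotomy x₁ x₂ with h | h | h
    · exact absurd heq (hinj x₁ h₁ x₂ h₂ h)
    · exact h
    · exact absurd heq.symm (hinj x₂ h₂ x₁ h₁ h)
  have himage : Finset.image (gg f) R = Finset.Ico (Ltop f) (Ltop f + (n - k)) := by
    apply Finset.eq_of_subset_of_card_le
    · intro j hj
      obtain ⟨x, hx, rfl⟩ := Finset.mem_image.mp hj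
      rw [Finset.mem_Ico, gg]
      by_cases hk : 0 < k
      · rw [dif_pos hk]
        set a := f ⟨k - 1, by omega⟩ with ha
        have hLa : Ltop f = cc f a := by rw [Ltop, dif_pos hk]; rfl
        have haR : a ∉ R := by
          rw [hR]
          simp only [Finset.mem_compl, not_not]
          exact Finset.mem_image.mpr ⟨⟨k - 1, by omega⟩, Finset.mem_univ _, rfl⟩
        by_cases hxa : x < a
        · rw [if_pos hxa]
          have h1 := hstrict x hx a hxa
          have h2 := hcc_lt x hx
          omega
        · rw [if_neg hxa]
          have hax : a ≤ x := not_lt.mp hxa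
          have h1 := hmono a x hax
          have h2 := hcc_lt x hx
          omega
      · rw [dif_neg hk, Ltop, dif_neg hk]
        have h2 := hcc_lt x hx
        omega
    · rw [Nat.card_Ico, Finset.card_image_of_injOn hinjOn, hcard]
      omega
  rw [← himage, Finset.sum_image hinjOn]

lemma step (n k : ℕ) (q : ℝ) :
    (∑ f : Fin (k + 1) → Fin n, if Function.Injective f then q ^ (dtop f + Ltop f) else 0)
      = (∑ f : Fin k → Fin n, if Function.Injective f then q ^ (dtop f + Ltop f) else 0)
        * ∑ j ∈ Finset.range (n - k), q ^ j := by
  have key : ∀ g : Fin k → Fin n,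
      (∑ x : Fin n, if Function.Injective (Fin.snoc g x : Fin (k + 1) → Fin n) then
          q ^ (dtop (Fin.snoc g x : Fin (k + 1) → Fin n)
            + Ltop (Fin.snoc g x : Fin (k + 1) → Fin n)) else 0)
        = (if Function.Injective g then q ^ (dtop g + Ltop g) else 0)
          * ∑ j ∈ Finset.range (n - k), q ^ j := by
    intro g
    by_cases hg : Function.Injective g
    · rw [if_pos hg]
      calc (∑ x : Fin n, if Function.Injective (Fin.snoc g x : Fin (k + 1) → Fin n) then
              q ^ (dtop (Fin.snoc g x : Fin (k + 1) → Fin n)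
                + Ltop (Fin.snoc g x : Fin (k + 1) → Fin n)) else 0)
          = ∑ x : Fin n, (if x ∈ (Finset.image g Finset.univ)ᶜ then
              q ^ (dtop g + gg g x) else 0) := by
            apply Finset.sum_congr rfl
            intro x _
            by_cases hx : x ∈ (Finset.image g Finset.univ)ᶜ
            · rw [if_pos hx, if_pos ((injective_snoc_iff g x).mpr
                ⟨hg, Finset.mem_compl.mp hx⟩)]
              congr 1
              rw [dtop_snoc, Ltop_snoc, gg]
              omega
            · rw [if_neg hx, if_neg]
              rw [injective_snoc_iff]
              rintro ⟨-, hni⟩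
              exact hx (Finset.mem_compl.mpr hni)
        _ = ∑ x ∈ (Finset.image g Finset.univ)ᶜ, q ^ (dtop g + gg g x) := by
            rw [Finset.sum_ite_mem, Finset.univ_inter]
        _ = q ^ dtop g * ∑ x ∈ (Finset.image g Finset.univ)ᶜ, q ^ (gg g x) := by
            simp [pow_add, Finset.mul_sum]
        _ = q ^ dtop g * ∑ j ∈ Finset.Ico (Ltop g) (Ltop g + (n - k)), q ^ j := by
            rw [sum_gg g hg q]
        _ = q ^ dtop g * (q ^ Ltop g * ∑ j ∈ Finset.range (n - k), q ^ j) := by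
            rw [Finset.sum_Ico_eq_sum_range]
            simp [pow_add, Finset.mul_sum]
        _ = q ^ (dtop g + Ltop g) * ∑ j ∈ Finset.range (n - k), q ^ j := by
            rw [pow_add]; ring
    · rw [if_neg hg, zero_mul]
      apply Finset.sum_eq_zero
      intro x _
      rw [if_neg]
      rw [injective_snoc_iff]
      rintro ⟨h, -⟩
      exact hg h
  calc (∑ f : Fin (k + 1) → Fin n, if Function.Injective f then q ^ (dtop f + Ltop f) else 0)
      = ∑ p : Fin n × (Fin k → Fin n),
          (if Function.Injective (Fin.snoc p.2 p.1 : Fin (k + 1) → Fin n) then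
            q ^ (dtop (Fin.snoc p.2 p.1 : Fin (k + 1) → Fin n)
              + Ltop (Fin.snoc p.2 p.1 : Fin (k + 1) → Fin n)) else 0) := by
        exact (Fintype.sum_equiv (Fin.snocEquiv (fun _ => Fin n)) _ _ (fun p => rfl)).symm
    _ = ∑ g : Fin k → Fin n, ∑ x : Fin n,
          (if Function.Injective (Fin.snoc g x : Fin (k + 1) → Fin n) then
            q ^ (dtop (Fin.snoc g x : Fin (k + 1) → Fin n)
              + Ltop (Fin.snoc g x : Fin (k + 1) → Fin n)) else 0) := by
        rw [Fintype.sum_prod_type]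
        exact Finset.sum_comm
    _ = ∑ g : Fin k → Fin n,
          (if Function.Injective g then q ^ (dtop g + Ltop g) else 0)
            * ∑ j ∈ Finset.range (n - k), q ^ j := by
        exact Finset.sum_congr rfl (fun g _ => key g)
    _ = _ := by rw [Finset.sum_mul]

theorem stmt4 (n k : ℕ) (hkn : k ≤ n) (q : ℝ) (hq0 : 0 < q) (hq1 : q < 1) :
    (∑ f : Fin k → Fin n,
        if Function.Injective f then q ^ (dtop f + Ltop f) else 0)
      = psi n q / psi (n - k) q := by
  induction k with
  | zero =>
    simp only [Nat.sub_zero]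
    rw [div_self (ne_of_gt (psi_pos hq0 n))]
    have h : ∀ f : Fin 0 → Fin n,
        (if Function.Injective f then q ^ (dtop f + Ltop f) else 0) = 1 := by
      intro f
      rw [if_pos (show Function.Injective f from fun a _ _ => a.elim0)]
      have h1 : dtop f = 0 := by simp [dtop]
      have h2 : Ltop f = 0 := by rw [Ltop, dif_neg (lt_irrefl 0)]
      rw [h1, h2]
      norm_num
    rw [Finset.sum_congr rfl (fun f _ => h f)]
    simp
  | succ k ih =>
    have hk : k ≤ n := by omega
    rw [step, ih hk]
    have hm : n - k = (n - (k + 1)) + 1 := by omega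
    rw [hm, psi_succ]
    have h1 : psi (n - (k + 1)) q ≠ 0 := ne_of_gt (psi_pos hq0 _)
    have h2 : (∑ j ∈ Finset.range (n - (k + 1) + 1), q ^ j) ≠ 0 :=
      ne_of_gt (Finset.sum_pos (fun j _ => pow_pos hq0 j) (by simp))
    field_simp
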